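/- With G, u, D as in the Dirichlet region construction (G discrete group of isometries of ℝⁿ, u a point with trivial stabilizer, D the open Dirichlet region centered at u), Euclidean n-space equals the union over r ∈ G of r(closure(D)); that is, every point of ℝⁿ lies in the closure of some G-translate of D. -/

import Mathlib

open AffineMap Filter

/-- Segment helper: if `u ≠ v` and `dist w u ≤ dist w v`, then every point strictly
inside the segment from `u` to `w` is strictly closer to `u` than to `v`. -/
lemma dirichlet_segment_aux {E : Type*} [NormedAddCommGroup E] [InnerProductSpace ℝ E]
    (u w v : E) (huv : u ≠ v) (hw : dist w u ≤ dist w v)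
    {t : ℝ} (ht0 : 0 ≤ t) (ht1 : t < 1) :
    dist (u + t • (w - u)) u < dist (u + t • (w - u)) v := by
  have key : ∀ p : E, dist p v ^ 2 = ‖u - v‖ ^ 2 + 2 * inner ℝ (u - v) (p - u) + ‖p - u‖ ^ 2 := by
    intro p
    have : p - v = (u - v) + (p - u) := by abel
    rw [dist_eq_norm, this, norm_add_sq_real]
  have hw2 : dist w u ^ 2 ≤ dist w v ^ 2 := by
    have := dist_nonneg (x := w) (y := u)
    nlinarith
  rw [key w] at hw2
  have hdwu : dist w u ^ 2 = ‖w - u‖ ^ 2 := by rw [dist_eq_norm]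
  rw [hdwu] at hw2
  -- so 0 ≤ ‖u-v‖² + 2⟪u-v, w-u⟫
  have h0 : 0 ≤ ‖u - v‖ ^ 2 + 2 * inner ℝ (u - v) (w - u) := by linarith
  have huv2 : (0:ℝ) < ‖u - v‖ ^ 2 := by
    have h := sub_ne_zero.mpr huv
    exact pow_pos (norm_pos_iff.mpr h) 2
  have hzu : dist (u + t • (w - u)) u ^ 2 = t ^ 2 * ‖w - u‖ ^ 2 := by
    rw [dist_eq_norm]
    have : u + t • (w - u) - u = t • (w - u) := by abel
    rw [this, norm_smul]
    simp [mul_pow, abs_of_nonneg ht0]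
  have hzv := key (u + t • (w - u))
  have hsub : u + t • (w - u) - u = t • (w - u) := by abel
  rw [hsub, real_inner_smul_right, norm_smul] at hzv
  rw [Real.norm_eq_abs, abs_of_nonneg ht0] at hzv
  have hlt : dist (u + t • (w - u)) u ^ 2 < dist (u + t • (w - u)) v ^ 2 := by
    rw [hzu, hzv]
    nlinarith [h0, huv2]
  have := dist_nonneg (x := u + t • (w - u)) (y := v)
  nlinarith [dist_nonneg (x := u + t • (w - u)) (y := u)]

/-- With `G`, `u`, `D` as in the Dirichlet region construction, Euclidean
`n`-space is the union over `r ∈ G` of `r(closure D)`: every point lies in the closure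
of some `G`-translate of `D`. -/
theorem dirichlet_region_covers (n : ℕ)
    (G : Subgroup (EuclideanSpace ℝ (Fin n) ≃ᵢ EuclideanSpace ℝ (Fin n)))
    (hdisc : ∀ x : EuclideanSpace ℝ (Fin n),
      IsClosed {y | ∃ r ∈ G, r x = y} ∧ DiscreteTopology {y | ∃ r ∈ G, r x = y})
    (u : EuclideanSpace ℝ (Fin n))
    (hu : ∀ r ∈ G, r u = u → r = 1) :
    ∀ x : EuclideanSpace ℝ (Fin n), ∃ r ∈ G,
      x ∈ (r : EuclideanSpace ℝ (Fin n) ≃ᵢ EuclideanSpace ℝ (Fin n)) ''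
        closure {y | ∀ s ∈ G, s ≠ 1 → dist y u < dist y (s u)} := by
  intro x
  set O : Set (EuclideanSpace ℝ (Fin n)) := {y | ∃ r ∈ G, r u = y} with hO
  have hOclosed : IsClosed O := (hdisc u).1
  have hOne : O.Nonempty := ⟨u, 1, G.one_mem, rfl⟩
  obtain ⟨y₀, hy₀O, hy₀⟩ := hOclosed.exists_infDist_eq_dist hOne x
  obtain ⟨r, hrG, hru⟩ := hy₀O
  refine ⟨r, hrG, r.symm x, ?_, r.apply_symm_apply x⟩
  set w := r.symm x with hw
  -- w is a nearest-orbit-point condition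
  have hkey : ∀ s ∈ G, dist w u ≤ dist w (s u) := by
    intro s hsG
    have h1 : dist w u = dist x (r u) := by
      rw [hw, ← r.dist_eq (r.symm x) u, r.apply_symm_apply]
    have h2 : dist w (s u) = dist x (r (s u)) := by
      rw [hw, ← r.dist_eq (r.symm x) (s u), r.apply_symm_apply]
    have hrs : r (s u) ∈ O := ⟨r * s, G.mul_mem hrG hsG, rfl⟩
    have := Metric.infDist_le_dist_of_mem hrs (x := x)
    rw [h1, h2, hru, ← hy₀]
    exact this
  -- show w ∈ closure D using the segment from u to w
  rw [mem_closure_iff_seq_limit]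
  refine ⟨fun k => u + (1 - (1:ℝ)/(k+1)) • (w - u), ?_, ?_⟩
  · intro k
    intro s hsG hs1
    have hsu : u ≠ s u := by
      intro h
      exact hs1 (hu s hsG h.symm)
    have ht0 : (0:ℝ) ≤ 1 - 1/(k+1) := by
      have : (1:ℝ)/(k+1) ≤ 1 := by
        rw [div_le_one (by positivity)]
        linarith [Nat.cast_nonneg (α := ℝ) k]
      linarith
    have ht1 : (1:ℝ) - 1/(k+1) < 1 := by
      have : (0:ℝ) < 1/(k+1) := by positivity
      linarith
    exact dirichlet_segment_aux u w (s u) hsu (hkey s hsG) ht0 ht1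
  · have h1 : Tendsto (fun k : ℕ => (1 - (1:ℝ)/(k+1))) atTop (nhds 1) := by
      have : Tendsto (fun n : ℕ => 1 / ((n : ℝ) + 1)) atTop (nhds 0) :=
        tendsto_one_div_add_atTop_nhds_zero_nat
      have h := (tendsto_const_nhds (x := (1:ℝ)) (f := atTop)).sub this
      simpa using h
    have h2 : Tendsto (fun k : ℕ => u + (1 - (1:ℝ)/(k+1)) • (w - u)) atTop
        (nhds (u + (1:ℝ) • (w - u))) :=
      tendsto_const_nhds.add (h1.smul tendsto_const_nhds)
    simpa using h2
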